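/- For all integers a, b ≥ 0, the difference c_{a,b} − c_{b,a} is an even integer, i.e. c_{a,b} − c_{b,a} ∈ 2ℤ. -/
import Mathlib


/-- The rational numbers `c_{a,b}^r = 2·(−1)^r·( C(2r, 2b+2) − (1 − 2^{−2r})·C(2r, 2a+1) )`
appearing in Zagier's formula. -/
def cZ (a b r : ℕ) : ℚ :=
  2 * (-1) ^ r * (((2 * r).choose (2 * b + 2) : ℚ)
    - (1 - (2 : ℚ) ^ (-(2 * (r : ℤ)))) * ((2 * r).choose (2 * a + 1) : ℚ))

/-- For all `a, b ≥ 0`, the difference `c_{a,b} − c_{b,a}` is an even integer. -/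
theorem cZ_sub_swap_even (a b : ℕ) :
    ∃ m : ℤ, cZ a b (a + b + 1) - cZ b a (b + a + 1) = 2 * (m : ℚ) := by
  have hr : b + a + 1 = a + b + 1 := by ring
  set r := a + b + 1 with hrdef
  have hsym : (2 * r).choose (2 * a + 1) = (2 * r).choose (2 * b + 1) := by
    rw [← Nat.choose_symm (by omega : 2 * a + 1 ≤ 2 * r)]
    congr 1
    omega
  refine ⟨(-1) ^ r * (((2 * r).choose (2 * b + 2) : ℤ) - ((2 * r).choose (2 * a + 2) : ℤ)), ?_⟩
  rw [hr]
  unfold cZ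
  rw [hsym]
  push_cast
  ring
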